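/- Finite-sample unbiasedness of the Weighted PROCOVA estimator (Theorem 1): Let ω : ℝ^N → ℝ^N be a measurable function with ω_i(t) > 0 for every t ∈ ℝ^N and every i, let Ω̂ be the random N×N diagonal matrix with diagonal entries Ω̂_{ii} = ω_i(e_1², …, e_N²), and set β̂ = (Vᵀ Ω̂⁻¹ V)⁻¹ Vᵀ Ω̂⁻¹ y. If Vᵀ Ω̂⁻¹ V is almost surely invertible and β̂ is integrable, then E[β̂] = β. -/

import Mathlib

open MeasureTheory ProbabilityTheory Matrix Finset

section WPaux

variable {α : Type*} [MeasurableSpace α]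

lemma wp_measurable_det {n : Type*} [Fintype n] [DecidableEq n] {f : α → Matrix n n ℝ}
    (hf : ∀ i j, Measurable fun a => f a i j) : Measurable fun a => (f a).det := by
  simp_rw [Matrix.det_apply']
  exact Finset.measurable_sum _ fun σ _ =>
    (Finset.measurable_prod _ fun i _ => hf _ _).const_mul _

lemma wp_measurable_inv_entry {n : Type*} [Fintype n] [DecidableEq n] {f : α → Matrix n n ℝ}
    (hf : ∀ i j, Measurable fun a => f a i j) (i j : n) :
    Measurable fun a => (f a)⁻¹ i j := by
  simp_rw [Matrix.inv_def, Matrix.smul_apply, smul_eq_mul, Ring.inverse_eq_inv',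
    Matrix.adjugate_apply]
  refine ((wp_measurable_det hf).inv).mul (wp_measurable_det fun k l => ?_)
  simp_rw [Matrix.updateRow_apply]
  by_cases h : k = j
  · simp only [h, if_pos rfl]; exact measurable_const
  · simpa [h] using hf k l

lemma wp_measurable_mul_entry {l n m : Type*} [Fintype n]
    {f : α → Matrix l n ℝ} {g : α → Matrix n m ℝ}
    (hf : ∀ i j, Measurable fun a => f a i j) (hg : ∀ i j, Measurable fun a => g a i j)
    (i : l) (j : m) : Measurable fun a => (f a * g a) i j := by
  simp_rw [Matrix.mul_apply]
  exact Finset.measurable_sum _ fun k _ => (hf i k).mul (hg k j)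

lemma wp_joint_law {ι Ω : Type*} [Fintype ι] [MeasurableSpace Ω] {μ : Measure Ω}
    [IsProbabilityMeasure μ] {f : ι → Ω → ℝ} (hf : ∀ i, Measurable (f i))
    (h : iIndepFun f μ) :
    Measure.map (fun x i => f i x) μ = Measure.pi (fun i => Measure.map (f i) μ) := by
  have hΦ : Measurable fun x (i : ι) => f i x := measurable_pi_lambda _ hf
  haveI : ∀ i, IsProbabilityMeasure (Measure.map (f i) μ) :=
    fun i => Measure.isProbabilityMeasure_map (hf i).aemeasurable
  refine (Measure.pi_eq fun s hs => ?_).symm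
  rw [Measure.map_apply hΦ (MeasurableSet.univ_pi hs)]
  have hpre : (fun x (i : ι) => f i x) ⁻¹' Set.pi Set.univ s = ⋂ i, f i ⁻¹' s i := by
    ext x; simp [Set.mem_pi]
  rw [hpre, h.meas_iInter fun i => ⟨s i, hs i, rfl⟩]
  exact Finset.prod_congr rfl fun i _ => (Measure.map_apply (hf i) (hs i)).symm

end WPaux

/-- **Finite-sample unbiasedness of the Weighted PROCOVA estimator** (Theorem 1):
with weights `Ω̂_{ii} = w_i(e_1², …, e_N²)` given by a positive measurable function of the
squared residuals, the weighted least squares estimator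
`β̂ = (Vᵀ Ω̂⁻¹ V)⁻¹ Vᵀ Ω̂⁻¹ y` satisfies `E[β̂] = β`, provided `Vᵀ Ω̂⁻¹ V` is almost surely
invertible and `β̂` is integrable. -/
theorem weighted_procova_unbiased
    {N M : ℕ} (hNM : N > M + 1)
    {Ω : Type*} [MeasurableSpace Ω] (μ : Measure Ω) [IsProbabilityMeasure μ]
    (V : Matrix (Fin N) (Fin (M + 1)) ℝ) (hV : IsUnit (Vᵀ * V).det)
    (H : Matrix (Fin N) (Fin N) ℝ) (hH : H = V * (Vᵀ * V)⁻¹ * Vᵀ)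
    (σ : Fin N → ℝ) (hσ : ∀ i, 0 < σ i)
    (ε : Fin N → Ω → ℝ) (hmeas : ∀ i, Measurable (ε i))
    (hindep : iIndepFun ε μ)
    (hgauss : ∀ i, Measure.map (ε i) μ = gaussianReal 0 ⟨σ i ^ 2, sq_nonneg (σ i)⟩)
    (β : Fin (M + 1) → ℝ)
    (y : Fin N → Ω → ℝ) (hy : ∀ i ω, y i ω = V.mulVec β i + ε i ω)
    (e : Fin N → Ω → ℝ) (he : ∀ i ω, e i ω = (1 - H).mulVec (fun j => y j ω) i)
    -- the weight function and the random diagonal weight matrix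
    (w : (Fin N → ℝ) → Fin N → ℝ) (hwmeas : Measurable w) (hwpos : ∀ t i, 0 < w t i)
    (Ωhat : Ω → Matrix (Fin N) (Fin N) ℝ)
    (hΩhat : ∀ x, Ωhat x = Matrix.diagonal (w (fun i => e i x ^ 2)))
    -- the weighted least squares estimator
    (βhat : Ω → Fin (M + 1) → ℝ)
    (hβhat : ∀ x, βhat x
      = ((Vᵀ * (Ωhat x)⁻¹ * V)⁻¹ * (Vᵀ * (Ωhat x)⁻¹)).mulVec (fun i => y i x))
    (hinv : ∀ᵐ x ∂μ, IsUnit (Vᵀ * (Ωhat x)⁻¹ * V).det)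
    (hint : ∀ j, Integrable (fun x => βhat x j) μ) :
    ∀ j, μ[fun x => βhat x j] = β j := by
  -- notation
  set Φ : Ω → Fin N → ℝ := fun x i => ε i x with hΦdef
  have hΦ : Measurable Φ := measurable_pi_lambda _ hmeas
  -- residuals in terms of ε
  have hHV : (1 - H) * V = 0 := by
    have h1 : H * V = V := by
      rw [hH, Matrix.mul_assoc, Matrix.mul_assoc, Matrix.nonsing_inv_mul _ hV, Matrix.mul_one]
    rw [Matrix.sub_mul, Matrix.one_mul, h1, sub_self]
  have hyvec : ∀ x, (fun i => y i x) = V.mulVec β + Φ x := by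
    intro x; funext i; simp [hy i x, hΦdef]
  have he' : ∀ x, (fun i => e i x ^ 2) = fun i => ((1 - H).mulVec (Φ x) i) ^ 2 := by
    intro x; funext i
    rw [he i x, hyvec x, Matrix.mulVec_add, Matrix.mulVec_mulVec, hHV, Matrix.zero_mulVec]
    simp
  -- the deterministic weight matrix and estimator shift as functions of ε
  set D : (Fin N → ℝ) → Matrix (Fin N) (Fin N) ℝ :=
    fun t => Matrix.diagonal (w fun i => ((1 - H).mulVec t i) ^ 2) with hDdef
  set G : (Fin N → ℝ) → Fin (M + 1) → ℝ :=
    fun t => ((Vᵀ * (D t)⁻¹ * V)⁻¹ * (Vᵀ * (D t)⁻¹)).mulVec t with hGdef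
  have hΩD : ∀ x, Ωhat x = D (Φ x) := by
    intro x; rw [hΩhat x, he' x]
  -- G is odd
  have hodd : ∀ t, G (-t) = -G t := by
    intro t
    have hD : D (-t) = D t := by
      simp only [hDdef, Matrix.mulVec_neg]
      congr 1
      funext i
      congr 1
      funext i
      simp [neg_sq]
    simp [hGdef, hD, Matrix.mulVec_neg]
  -- G is measurable componentwise
  have hsmeas : Measurable fun t : Fin N → ℝ => w fun i => ((1 - H).mulVec t i) ^ 2 := by
    refine hwmeas.comp (measurable_pi_lambda _ fun i => ?_)
    have : Continuous fun t : Fin N → ℝ => ((1 - H).mulVec t i) ^ 2 := by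
      simp only [Matrix.mulVec, dotProduct]
      fun_prop
    exact this.measurable
  have hDm : ∀ i j, Measurable fun t => D t i j := by
    intro i j
    simp only [hDdef, Matrix.diagonal_apply]
    by_cases h : i = j
    · simp only [h, if_true]; exact (measurable_pi_apply j).comp hsmeas
    · simpa [h] using measurable_const
  have hDinv : ∀ i j, Measurable fun t => (D t)⁻¹ i j := wp_measurable_inv_entry hDm
  have hC : ∀ i j, Measurable fun t => (Vᵀ * (D t)⁻¹) i j :=
    wp_measurable_mul_entry (fun i j => measurable_const) hDinv
  have hB : ∀ i j, Measurable fun t => (Vᵀ * (D t)⁻¹ * V) i j :=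
    wp_measurable_mul_entry hC fun i j => measurable_const
  have hBinv : ∀ i j, Measurable fun t => (Vᵀ * (D t)⁻¹ * V)⁻¹ i j :=
    wp_measurable_inv_entry hB
  have hA : ∀ i j, Measurable fun t => ((Vᵀ * (D t)⁻¹ * V)⁻¹ * (Vᵀ * (D t)⁻¹)) i j :=
    wp_measurable_mul_entry hBinv hC
  have hGmeas : ∀ j, Measurable fun t => G t j := by
    intro j
    simp only [hGdef, Matrix.mulVec, dotProduct]
    exact Finset.measurable_sum _ fun k _ => (hA j k).mul (measurable_pi_apply k)
  -- the law of ε is symmetric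
  set π : Measure (Fin N → ℝ) := Measure.map Φ μ with hπdef
  have hneglaw : ∀ i, Measure.map (fun x => -(ε i x)) μ
      = gaussianReal 0 ⟨σ i ^ 2, sq_nonneg (σ i)⟩ := by
    intro i
    have : (fun x => -(ε i x)) = (fun r : ℝ => -1 * r) ∘ ε i := by
      funext x; simp
    rw [this, ← Measure.map_map (f := ε i) (by fun_prop) (hmeas i), hgauss i]
    have hc := gaussianReal_map_const_mul (μ := (0:ℝ)) (v := ⟨σ i ^ 2, sq_nonneg (σ i)⟩) (-1)
    rw [hc]
    congr 1
    · norm_num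
    · ext; simp; exact one_mul (σ i ^ 2)
  have hneg : Measure.map (fun t : Fin N → ℝ => -t) π = π := by
    have h1 : iIndepFun (fun i => (fun r : ℝ => -r) ∘ ε i) μ :=
      hindep.comp _ fun i => measurable_neg
    have h2 := wp_joint_law (f := fun i => (fun r : ℝ => -r) ∘ ε i)
      (fun i => (hmeas i).neg) h1
    have h3 := wp_joint_law (f := ε) hmeas hindep
    rw [hπdef, Measure.map_map measurable_neg hΦ]
    have h4 : (fun t : Fin N → ℝ => -t) ∘ Φ = fun x i => ((fun r : ℝ => -r) ∘ ε i) x := rfl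
    rw [h4, h2, h3]
    congr 1
    funext i
    show Measure.map (fun x => -ε i x) μ = Measure.map (ε i) μ
    rw [hneglaw i, hgauss i]
  -- βhat = β + G ∘ Φ a.e.
  have hae : ∀ᵐ x ∂μ, βhat x = β + G (Φ x) := by
    filter_upwards [hinv] with x hx
    rw [hΩD x] at hx
    have h1 : (Vᵀ * (D (Φ x))⁻¹ * V)⁻¹ * (Vᵀ * (D (Φ x))⁻¹) * V = 1 := by
      rw [Matrix.mul_assoc]
      exact Matrix.nonsing_inv_mul _ hx
    rw [hβhat x, hyvec x, hΩD x, Matrix.mulVec_add]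
    congr 1
    · rw [Matrix.mulVec_mulVec, h1, Matrix.one_mulVec]
  intro j
  have haej : (fun x => βhat x j) =ᵐ[μ] fun x => β j + G (Φ x) j := by
    filter_upwards [hae] with x hx
    rw [hx]; simp
  have hintG : Integrable (fun x => G (Φ x) j) μ := by
    have : Integrable (fun x => βhat x j - β j) μ := (hint j).sub (integrable_const _)
    refine this.congr ?_
    filter_upwards [haej] with x hx
    rw [hx]; ring
  have hI0 : ∫ x, G (Φ x) j ∂μ = 0 := by
    have hmap : ∫ x, G (Φ x) j ∂μ = ∫ t, G t j ∂π := by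
      rw [hπdef, integral_map hΦ.aemeasurable (hGmeas j).aestronglyMeasurable]
    have hmap2 : ∫ t, G t j ∂π = ∫ t, G (-t) j ∂π := by
      conv_lhs => rw [← hneg]
      rw [integral_map measurable_neg.aemeasurable (hGmeas j).aestronglyMeasurable]
    have hmap3 : ∫ t, G (-t) j ∂π = -∫ t, G t j ∂π := by
      simp_rw [hodd]
      simp [integral_neg]
    have := hmap2.trans hmap3
    have h5 : ∫ t, G t j ∂π = 0 := by linarith
    rw [hmap, h5]
  calc μ[fun x => βhat x j] = ∫ x, (β j + G (Φ x) j) ∂μ := integral_congr_ae haej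
    _ = β j := by
        rw [integral_add (integrable_const _) hintG, hI0, integral_const]
        simp
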